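/- Let L₁, L₂ be positive integers, J > 0, h > 0, and suppose h > 2J/L₁ + 2J/L₂. Then the configuration σ_c(t) = ε(t) (equal to +1 where the cell-board field is +h and to −1 where it is −h) is a ground state of the cell-board Ising Hamiltonian: for every finite set V ⊂ ℤ², 2J·Σ_{{t,s}∈∂V, t∈V, s∉V} ε(t)ε(s) + 2h·|V| ≥ 0. -/

import Mathlib

/-- Sign of the cell-board external field: `+1` on sites whose cell-coordinates
`⌊t₁/L₁⌋ + ⌊t₂/L₂⌋` (floor division) sum to an even number, and `-1` otherwise. -/
noncomputable def cellSign (L1 L2 : ℕ) (t : ℤ × ℤ) : ℝ :=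
  if Even (Int.fdiv t.1 (L1 : ℤ) + Int.fdiv t.2 (L2 : ℤ)) then 1 else -1

/-- Boundary edges of a finite set `V ⊂ ℤ²` in the direction `e`: the edge `{u, u+e}`
belongs to the boundary iff exactly one of its endpoints lies in `V`.  An edge is
represented by its base point `u`. -/
def bdry (V : Finset (ℤ × ℤ)) (e : ℤ × ℤ) : Finset (ℤ × ℤ) :=
  (V ∪ V.image (fun u => u - e)).filter (fun u => ¬ ((u ∈ V) ↔ (u + e ∈ V)))


section Aux


def bdry' (V : Finset (ℤ × ℤ)) (e : ℤ × ℤ) : Finset (ℤ × ℤ) :=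
  (V ∪ V.image (fun u => u - e)).filter (fun u => ¬ ((u ∈ V) ↔ (u + e ∈ V)))

lemma mem_bdry' {V : Finset (ℤ × ℤ)} {e u : ℤ × ℤ} :
    u ∈ bdry' V e ↔ ¬ ((u ∈ V) ↔ (u + e ∈ V)) := by
  simp only [bdry', Finset.mem_filter, Finset.mem_union, Finset.mem_image, and_iff_right_iff_imp]
  intro hne
  by_cases hu : u ∈ V
  · exact Or.inl hu
  · exact Or.inr ⟨u + e, by tauto, by ring⟩

def bdry1 (S : Finset ℤ) : Finset ℤ :=
  (S ∪ S.image (fun x => x - 1)).filter (fun x => ¬ ((x ∈ S) ↔ (x + 1 ∈ S)))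

lemma mem_bdry1 {S : Finset ℤ} {x : ℤ} :
    x ∈ bdry1 S ↔ ¬ ((x ∈ S) ↔ (x + 1 ∈ S)) := by
  simp only [bdry1, Finset.mem_filter, Finset.mem_union, Finset.mem_image, and_iff_right_iff_imp]
  intro hne
  by_cases hu : x ∈ S
  · exact Or.inl hu
  · exact Or.inr ⟨x + 1, by tauto, by ring⟩

noncomputable def sgn (L : ℕ) (x : ℤ) : ℝ :=
  if Even (Int.fdiv x (L : ℤ)) then 1 else -1

lemma sgn_mul_self (L : ℕ) (x : ℤ) : sgn L x * sgn L x = 1 := by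
  unfold sgn; split <;> norm_num

lemma fdiv_step {L : ℕ} (hL : 0 < L) (x : ℤ) :
    (if ((L:ℤ) ∣ (x + 1)) then Int.fdiv (x+1) (L:ℤ) = Int.fdiv x (L:ℤ) + 1
     else Int.fdiv (x+1) (L:ℤ) = Int.fdiv x (L:ℤ)) := by
  have hL' : (0:ℤ) < (L:ℤ) := by exact_mod_cast hL
  have hLne : (L:ℤ) ≠ 0 := ne_of_gt hL'
  rw [Int.fdiv_eq_ediv_of_nonneg _ (le_of_lt hL'), Int.fdiv_eq_ediv_of_nonneg _ (le_of_lt hL')]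
  have h1 : 0 ≤ x % (L:ℤ) := Int.emod_nonneg x hLne
  have h2 : x % (L:ℤ) < (L:ℤ) := Int.emod_lt_of_pos x hL'
  have hx : (L:ℤ) * (x / (L:ℤ)) + x % (L:ℤ) = x := Int.mul_ediv_add_emod x (L:ℤ)
  split
  · next hdvd =>
      obtain ⟨k, hk⟩ := hdvd
      have e2 : (x+1) / (L:ℤ) = k := by rw [hk, Int.mul_ediv_cancel_left _ hLne]
      have e3 : x = ((L:ℤ) - 1) + (L:ℤ) * (k - 1) := by linarith
      have e4 : x / (L:ℤ) = k - 1 := by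
        rw [e3, Int.add_mul_ediv_left _ _ hLne,
          Int.ediv_eq_zero_of_lt (by linarith) (by linarith), zero_add]
      rw [e2, e4]; ring
  · next hdvd =>
      have hne : x % (L:ℤ) + 1 < (L:ℤ) := by
        rcases lt_or_eq_of_le (by linarith : x % (L:ℤ) + 1 ≤ (L:ℤ)) with h | h
        · exact h
        · exact absurd ⟨x / (L:ℤ) + 1, by linarith⟩ hdvd
      have e3 : x + 1 = (x % (L:ℤ) + 1) + (L:ℤ) * (x / (L:ℤ)) := by linarith
      rw [e3, Int.add_mul_ediv_left _ _ hLne,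
        Int.ediv_eq_zero_of_lt (by linarith) hne, zero_add]

lemma sgn_step {L : ℕ} (hL : 0 < L) (x : ℤ) :
    sgn L x * sgn L (x+1) = 1 ∨ (sgn L x * sgn L (x+1) = -1 ∧ (L:ℤ) ∣ (x + 1)) := by
  have h := fdiv_step hL x
  by_cases hdvd : (L:ℤ) ∣ (x+1)
  · rw [if_pos hdvd] at h
    right
    refine ⟨?_, hdvd⟩
    unfold sgn
    rw [h]
    by_cases he : Even (Int.fdiv x (L:ℤ))
    · rw [if_pos he, if_neg (by simp [Int.even_add_one, he])]; ring
    · rw [if_neg he, if_pos (by simp [Int.even_add_one, he]; exact Int.not_even_iff_odd.mp he)]; ring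
  · rw [if_neg hdvd] at h
    left
    unfold sgn
    rw [h]
    split <;> norm_num

lemma oneDim (L : ℕ) (hL : 0 < L) (S : Finset ℤ) :
    0 ≤ (L:ℝ) * (∑ x ∈ bdry1 S, sgn L x * sgn L (x+1)) + 2 * (S.card : ℝ) := by
  induction S using Finset.strongInduction with
  | _ S ih =>
  rcases S.eq_empty_or_nonempty with rfl | hne
  · simp [bdry1]
  · obtain ⟨b, hbS, hble⟩ : ∃ b ∈ S, ∀ y ∈ S, y ≤ b :=
      ⟨S.max' hne, S.max'_mem hne, fun y hy => S.le_max' y hy⟩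
    obtain ⟨a, ⟨hab, hIcc⟩, hleast⟩ :=
      Int.exists_least_of_bdd (P := fun c => c ≤ b ∧ Finset.Icc c b ⊆ S)
        ⟨S.min' hne, fun z ⟨hzb, hz⟩ => S.min'_le z (hz (Finset.mem_Icc.mpr ⟨le_refl z, hzb⟩))⟩
        ⟨b, le_refl b, by simp [hbS]⟩
    have haS : a - 1 ∉ S := by
      intro hcon
      have : ¬ (a - 1 ≤ b ∧ Finset.Icc (a-1) b ⊆ S) := by
        intro hP
        have := hleast _ hP
        omega
      refine this ⟨by omega, fun z hz => ?_⟩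
      rcases Finset.mem_Icc.mp hz with ⟨h1, h2⟩
      rcases eq_or_lt_of_le h1 with rfl | h1'
      · exact hcon
      · exact hIcc (Finset.mem_Icc.mpr ⟨by omega, h2⟩)
    set S' := S.filter (fun x => x ≤ a - 2) with hS'def
    have hS'mem : ∀ x, x ∈ S' ↔ (x ∈ S ∧ x ≤ a - 2) := by
      intro x; simp [hS'def]
    have hSmem : ∀ x, x ∈ S ↔ (x ∈ S' ∨ (a ≤ x ∧ x ≤ b)) := by
      intro x
      constructor
      · intro hx
        by_cases hxa : x ≤ a - 2
        · exact Or.inl ((hS'mem x).mpr ⟨hx, hxa⟩)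
        · have : x ≠ a - 1 := fun hcon => haS (hcon ▸ hx)
          exact Or.inr ⟨by omega, hble x hx⟩
      · rintro (hx | ⟨h1, h2⟩)
        · exact ((hS'mem x).mp hx).1
        · exact hIcc (Finset.mem_Icc.mpr ⟨h1, h2⟩)
    have hssub : S' ⊂ S := by
      constructor
      · intro x hx; exact ((hS'mem x).mp hx).1
      · intro hcon
        have := (hS'mem b).mp (hcon hbS)
        omega
    have hdisj : Disjoint S' (Finset.Icc a b) := by
      rw [Finset.disjoint_left]
      intro x hx hx'
      have := (hS'mem x).mp hx
      have := Finset.mem_Icc.mp hx'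
      omega
    have hSeq : S = S' ∪ Finset.Icc a b := by
      ext x
      rw [hSmem, Finset.mem_union, Finset.mem_Icc]
    have hcard : (S.card : ℝ) = (S'.card : ℝ) + ((b + 1 - a : ℤ) : ℝ) := by
      have hc0 : S.card = S'.card + (b + 1 - a).toNat := by
        rw [hSeq, Finset.card_union_of_disjoint hdisj, Int.card_Icc]
      have h0 : (((b + 1 - a).toNat : ℕ) : ℝ) = ((b + 1 - a : ℤ) : ℝ) := by
        rw [← Int.cast_natCast, Int.toNat_of_nonneg (by omega : (0:ℤ) ≤ b + 1 - a)]
      rw [hc0, Nat.cast_add, h0]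
    have hbdry : bdry1 S = insert (a-1) (insert b (bdry1 S')) := by
      ext x
      simp only [Finset.mem_insert, mem_bdry1]
      rw [hSmem x, hSmem (x+1)]
      by_cases p1 : x ∈ S' <;> by_cases p2 : x + 1 ∈ S' <;>
        [ (have q1 := ((hS'mem x).mp p1).2; have q2 := ((hS'mem (x+1)).mp p2).2);
          (have q1 := ((hS'mem x).mp p1).2);
          (have q2 := ((hS'mem (x+1)).mp p2).2);
          skip ] <;>
        simp only [p1, p2, true_or, false_or, iff_true, iff_false, not_true, not_false_iff,
          true_iff, false_iff, or_false, or_true] <;>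
        omega
    have hnotmem1 : (a-1) ∉ insert b (bdry1 S') := by
      simp only [Finset.mem_insert, mem_bdry1]
      push_neg
      refine ⟨by omega, ?_⟩
      have n1 : a - 1 ∉ S' := fun hc => by have := (hS'mem _).mp hc; omega
      have n2 : a - 1 + 1 ∉ S' := fun hc => by have := (hS'mem _).mp hc; omega
      tauto
    have hnotmem2 : b ∉ bdry1 S' := by
      rw [mem_bdry1]
      have n1 : b ∉ S' := fun hc => by have := (hS'mem _).mp hc; omega
      have n2 : b + 1 ∉ S' := fun hc => by have := (hS'mem _).mp hc; omega
      tauto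
    rw [hbdry, Finset.sum_insert hnotmem1, Finset.sum_insert hnotmem2, hcard]
    have ihS' := ih S' hssub
    have key : 0 ≤ (L:ℝ) * (sgn L (a-1) * sgn L (a-1+1) + sgn L b * sgn L (b+1))
        + 2 * ((b + 1 - a : ℤ) : ℝ) := by
      have hL' : (1:ℝ) ≤ (L:ℝ) := by exact_mod_cast hL
      have hba : (1:ℝ) ≤ ((b + 1 - a : ℤ) : ℝ) := by exact_mod_cast (by omega : (1:ℤ) ≤ b + 1 - a)
      rcases sgn_step hL (a-1) with h1 | ⟨h1, hd1⟩ <;>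
        rcases sgn_step hL b with h2 | ⟨h2, hd2⟩
      · rw [h1, h2]; positivity
      · rw [h1, h2]; linarith
      · rw [h1, h2]; linarith
      · rw [h1, h2]
        have heq : (a - 1) + 1 = a := by ring
        rw [heq] at hd1
        have hdvd : (L:ℤ) ∣ (b + 1 - a) := dvd_sub hd2 hd1
        have hLba : (L:ℤ) ≤ b + 1 - a := Int.le_of_dvd (by omega) hdvd
        have : ((L:ℤ):ℝ) ≤ ((b + 1 - a : ℤ) : ℝ) := by exact_mod_cast hLba
        push_cast at this ⊢
        nlinarith
    nlinarith [key, ihS']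

end Aux

lemma bdry_eq (V : Finset (ℤ × ℤ)) (e : ℤ × ℤ) : bdry V e = bdry' V e := rfl

lemma mem_bdry {V : Finset (ℤ × ℤ)} {e u : ℤ × ℤ} :
    u ∈ bdry V e ↔ ¬ ((u ∈ V) ↔ (u + e ∈ V)) := by
  rw [bdry_eq]; exact mem_bdry'

lemma cellSign_eq (L1 L2 : ℕ) (t : ℤ × ℤ) :
    cellSign L1 L2 t = sgn L1 t.1 * sgn L2 t.2 := by
  unfold cellSign sgn
  by_cases h1 : Even (Int.fdiv t.1 (L1 : ℤ)) <;>
    by_cases h2 : Even (Int.fdiv t.2 (L2 : ℤ)) <;>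
      simp [h1, h2, Int.even_add, iff_iff_implies_and_implies] <;> tauto

def rowOf (V : Finset (ℤ × ℤ)) (y : ℤ) : Finset ℤ :=
  (V.filter (fun u => u.2 = y)).image Prod.fst

lemma mem_rowOf {V : Finset (ℤ × ℤ)} {y x : ℤ} : x ∈ rowOf V y ↔ (x, y) ∈ V := by
  simp only [rowOf, Finset.mem_image, Finset.mem_filter]
  constructor
  · rintro ⟨u, ⟨hu, hy⟩, rfl⟩
    rwa [show (u.1, y) = u by rw [← hy]]
  · intro h
    exact ⟨(x, y), ⟨h, rfl⟩, rfl⟩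

def colOf (V : Finset (ℤ × ℤ)) (x : ℤ) : Finset ℤ :=
  (V.filter (fun u => u.1 = x)).image Prod.snd

lemma mem_colOf {V : Finset (ℤ × ℤ)} {x y : ℤ} : y ∈ colOf V x ↔ (x, y) ∈ V := by
  simp only [colOf, Finset.mem_image, Finset.mem_filter]
  constructor
  · rintro ⟨u, ⟨hu, hx⟩, rfl⟩
    rwa [show (x, u.2) = u by rw [← hx]]
  · intro h
    exact ⟨(x, y), ⟨h, rfl⟩, rfl⟩

lemma hsum_rows (L1 L2 : ℕ) (V : Finset (ℤ × ℤ)) :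
    (∑ u ∈ bdry V (1, 0), cellSign L1 L2 u * cellSign L1 L2 (u + (1, 0)))
      = ∑ y ∈ V.image Prod.snd, ∑ x ∈ bdry1 (rowOf V y), sgn L1 x * sgn L1 (x+1) := by
  rw [← Finset.sum_fiberwise_of_maps_to (g := Prod.snd) (t := V.image Prod.snd) ?hmap]
  case hmap =>
    intro u hu
    rw [mem_bdry] at hu
    by_cases h : u ∈ V
    · exact Finset.mem_image_of_mem _ h
    · have : u + (1,0) ∈ V := by tauto
      have : (u + (1,0)).2 ∈ V.image Prod.snd := Finset.mem_image_of_mem _ this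
      simpa using this
  refine Finset.sum_congr rfl (fun y _ => ?_)
  have hfe : (bdry V (1,0)).filter (fun u => u.2 = y)
      = (bdry1 (rowOf V y)).image (fun x => (x, y)) := by
    ext u
    simp only [Finset.mem_filter, Finset.mem_image, mem_bdry, mem_bdry1, mem_rowOf]
    constructor
    · rintro ⟨hb, hy⟩
      refine ⟨u.1, ?_, by rw [← hy]⟩
      have e1 : (u.1, y) = u := by rw [← hy]
      have e2 : (u.1 + 1, y) = u + (1, 0) := by rw [← hy]; simp [Prod.ext_iff]
      rw [e1, e2]
      exact hb
    · rintro ⟨x, hx, rfl⟩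
      refine ⟨?_, rfl⟩
      have e2 : ((x, y) : ℤ × ℤ) + (1, 0) = (x + 1, y) := by simp [Prod.ext_iff]
      rw [e2]
      exact hx
  rw [hfe, Finset.sum_image (by intro a _ b _ hab; exact (Prod.mk.injEq _ _ _ _ ▸ hab : _ ∧ _).1)]
  refine Finset.sum_congr rfl (fun x _ => ?_)
  have e2 : ((x, y) : ℤ × ℤ) + (1, 0) = (x + 1, y) := by simp [Prod.ext_iff]
  rw [e2, cellSign_eq, cellSign_eq]
  calc (sgn L1 x * sgn L2 y) * (sgn L1 (x+1) * sgn L2 y)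
      = (sgn L1 x * sgn L1 (x+1)) * (sgn L2 y * sgn L2 y) := by ring
    _ = sgn L1 x * sgn L1 (x+1) := by rw [sgn_mul_self, mul_one]

lemma hsum_cols (L1 L2 : ℕ) (V : Finset (ℤ × ℤ)) :
    (∑ u ∈ bdry V (0, 1), cellSign L1 L2 u * cellSign L1 L2 (u + (0, 1)))
      = ∑ x ∈ V.image Prod.fst, ∑ y ∈ bdry1 (colOf V x), sgn L2 y * sgn L2 (y+1) := by
  rw [← Finset.sum_fiberwise_of_maps_to (g := Prod.fst) (t := V.image Prod.fst) ?hmap]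
  case hmap =>
    intro u hu
    rw [mem_bdry] at hu
    by_cases h : u ∈ V
    · exact Finset.mem_image_of_mem _ h
    · have : u + (0,1) ∈ V := by tauto
      have : (u + (0,1)).1 ∈ V.image Prod.fst := Finset.mem_image_of_mem _ this
      simpa using this
  refine Finset.sum_congr rfl (fun x _ => ?_)
  have hfe : (bdry V (0,1)).filter (fun u => u.1 = x)
      = (bdry1 (colOf V x)).image (fun y => (x, y)) := by
    ext u
    simp only [Finset.mem_filter, Finset.mem_image, mem_bdry, mem_bdry1, mem_colOf]
    constructor
    · rintro ⟨hb, hx⟩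
      refine ⟨u.2, ?_, by rw [← hx]⟩
      have e1 : (x, u.2) = u := by rw [← hx]
      have e2 : (x, u.2 + 1) = u + (0, 1) := by rw [← hx]; simp [Prod.ext_iff]
      rw [e1, e2]
      exact hb
    · rintro ⟨y, hy, rfl⟩
      refine ⟨?_, rfl⟩
      have e2 : ((x, y) : ℤ × ℤ) + (0, 1) = (x, y + 1) := by simp [Prod.ext_iff]
      rw [e2]
      exact hy
  rw [hfe, Finset.sum_image (by intro a _ b _ hab; exact (Prod.mk.injEq _ _ _ _ ▸ hab : _ ∧ _).2)]
  refine Finset.sum_congr rfl (fun y _ => ?_)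
  have e2 : ((x, y) : ℤ × ℤ) + (0, 1) = (x, y + 1) := by simp [Prod.ext_iff]
  rw [e2, cellSign_eq, cellSign_eq]
  calc (sgn L1 x * sgn L2 y) * (sgn L1 x * sgn L2 (y+1))
      = (sgn L2 y * sgn L2 (y+1)) * (sgn L1 x * sgn L1 x) := by ring
    _ = sgn L2 y * sgn L2 (y+1) := by rw [sgn_mul_self, mul_one]

lemma card_rows (V : Finset (ℤ × ℤ)) :
    (V.card : ℝ) = ∑ y ∈ V.image Prod.snd, ((rowOf V y).card : ℝ) := by
  rw_mod_cast [Finset.card_eq_sum_card_fiberwise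
    (f := Prod.snd) (t := V.image Prod.snd) (fun u hu => Finset.mem_image_of_mem _ hu)]
  refine Finset.sum_congr rfl (fun y _ => ?_)
  rw [rowOf, Finset.card_image_of_injOn]
  intro u hu v hv huv
  have h1 := (Finset.mem_filter.mp hu).2
  have h2 := (Finset.mem_filter.mp hv).2
  exact Prod.ext huv (h1.trans h2.symm)

lemma card_cols (V : Finset (ℤ × ℤ)) :
    (V.card : ℝ) = ∑ x ∈ V.image Prod.fst, ((colOf V x).card : ℝ) := by
  rw_mod_cast [Finset.card_eq_sum_card_fiberwise
    (f := Prod.fst) (t := V.image Prod.fst) (fun u hu => Finset.mem_image_of_mem _ hu)]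
  refine Finset.sum_congr rfl (fun x _ => ?_)
  rw [colOf, Finset.card_image_of_injOn]
  intro u hu v hv huv
  have h1 := (Finset.mem_filter.mp hu).2
  have h2 := (Finset.mem_filter.mp hv).2
  exact Prod.ext (h1.trans h2.symm) huv

/-- if `h > 2J/L₁ + 2J/L₂`, the configuration `σ_c = ε` (equal to `+1`
where the cell-board field is `+h` and `−1` where it is `−h`) is a ground state:
for every finite `V ⊂ ℤ²`,
`2J·Σ_{{t,s}∈∂V} ε(t)ε(s) + 2h·|V| ≥ 0`  (the sum runs over the boundary edges). -/
theorem sigma_c_ground_state (L1 L2 : ℕ) (hL1 : 0 < L1) (hL2 : 0 < L2)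
    (J h : ℝ) (hJ : 0 < J) (hh : 0 < h)
    (hcond : h > 2 * J / (L1 : ℝ) + 2 * J / (L2 : ℝ)) :
    ∀ V : Finset (ℤ × ℤ),
      2 * J * ((∑ u ∈ bdry V (1, 0), cellSign L1 L2 u * cellSign L1 L2 (u + (1, 0))) +
               (∑ u ∈ bdry V (0, 1), cellSign L1 L2 u * cellSign L1 L2 (u + (0, 1)))) +
        2 * h * (V.card : ℝ) ≥ 0 := by
  intro V
  set H : ℝ := ∑ u ∈ bdry V (1, 0), cellSign L1 L2 u * cellSign L1 L2 (u + (1, 0)) with hH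
  set W : ℝ := ∑ u ∈ bdry V (0, 1), cellSign L1 L2 u * cellSign L1 L2 (u + (0, 1)) with hW
  have hL1' : (0:ℝ) < (L1:ℝ) := by exact_mod_cast hL1
  have hL2' : (0:ℝ) < (L2:ℝ) := by exact_mod_cast hL2
  have hrow : 0 ≤ (L1:ℝ) * H + 2 * (V.card : ℝ) := by
    rw [hH, hsum_rows L1 L2 V, card_rows V, Finset.mul_sum, Finset.mul_sum, ← Finset.sum_add_distrib]
    · refine Finset.sum_nonneg (fun y _ => ?_)
      have := oneDim L1 hL1 (rowOf V y)
      linarith [this]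
  have hcol : 0 ≤ (L2:ℝ) * W + 2 * (V.card : ℝ) := by
    rw [hW, hsum_cols L1 L2 V, card_cols V, Finset.mul_sum, Finset.mul_sum, ← Finset.sum_add_distrib]
    · refine Finset.sum_nonneg (fun x _ => ?_)
      have := oneDim L2 hL2 (colOf V x)
      linarith [this]
  have hc : (0:ℝ) ≤ (V.card : ℝ) := Nat.cast_nonneg _
  have k1 : 0 ≤ (J / (L1:ℝ)) * ((L1:ℝ) * H + 2 * (V.card : ℝ)) :=
    mul_nonneg (le_of_lt (div_pos hJ hL1')) hrow
  have k2 : 0 ≤ (J / (L2:ℝ)) * ((L2:ℝ) * W + 2 * (V.card : ℝ)) :=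
    mul_nonneg (le_of_lt (div_pos hJ hL2')) hcol
  have e1 : (J / (L1:ℝ)) * ((L1:ℝ) * H + 2 * (V.card : ℝ))
      = J * H + 2 * (J / (L1:ℝ)) * (V.card : ℝ) := by
    field_simp
  have e2 : (J / (L2:ℝ)) * ((L2:ℝ) * W + 2 * (V.card : ℝ))
      = J * W + 2 * (J / (L2:ℝ)) * (V.card : ℝ) := by
    field_simp
  rw [e1] at k1
  rw [e2] at k2
  have hcnd : (2 * J / (L1:ℝ) + 2 * J / (L2:ℝ)) * (V.card : ℝ) ≤ h * (V.card : ℝ) :=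
    mul_le_mul_of_nonneg_right (le_of_lt hcond) hc
  have expand : (2 * J / (L1:ℝ) + 2 * J / (L2:ℝ)) * (V.card : ℝ)
      = 2 * (J / (L1:ℝ)) * (V.card : ℝ) + 2 * (J / (L2:ℝ)) * (V.card : ℝ) := by
    ring
  rw [expand] at hcnd
  linarith
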